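/- For integers 1 ≤ R < A, define p_{R,A}(x) = (2R+2x)/(A+R+1) · C(2A, A−R−x)/C(2A, A−R−1) for 1 ≤ x ≤ A−R, and for an integer m ≥ 1 define q_m(y) = m/((m+y−1)(m+y)) for y ≥ 1. Then there exist constants c₁ ∈ (0,1), c₂ > 0 and N such that for all integers A ≥ N and 1 ≤ R < A, ∑_{x=1}^{A−R} ∑_{y=1}^{∞} p_{R,A}(x) · q_{A+R+x}(y) · (R+x)/√(A+y) ≤ c₁ · R/√A + c₂. -/

import Mathlib

/-- `p_{R,A}(x) = (2R+2x)/(A+R+1) · C(2A, A-R-x)/C(2A, A-R-1)`, for `1 ≤ x ≤ A-R`. -/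
noncomputable def pRA (A R x : ℕ) : ℝ :=
  (2 * (R : ℝ) + 2 * (x : ℝ)) / ((A : ℝ) + R + 1) *
    ((Nat.choose (2 * A) (A - R - x) : ℝ) / (Nat.choose (2 * A) (A - R - 1) : ℝ))

/-- `q_m(y) = m/((m+y-1)(m+y))`, for `y ≥ 1`. -/
noncomputable def qm (m y : ℕ) : ℝ :=
  (m : ℝ) / (((m : ℝ) + y - 1) * ((m : ℝ) + y))


lemma choose_ratio (N k : ℕ) : (N - k) * N.choose k = N * (N-1).choose k := by
  rcases N with _ | n
  · rcases k with _ | k <;> simp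
  · rw [Nat.succ_sub_one, Nat.add_one_mul_choose_eq, Nat.choose_succ_right_eq, Nat.mul_comm]

lemma qm_eq' (m y : ℕ) : qm m (y+1) = (m:ℝ)/(((m:ℝ)+y)*((m:ℝ)+y+1)) := by
  unfold qm; push_cast; ring_nf

lemma qm_eq (m y : ℕ) (hm : 1 ≤ m) :
    qm m (y+1) = (m:ℝ)/((m:ℝ)+y) - (m:ℝ)/((m:ℝ)+y+1) := by
  have hm' : (1:ℝ) ≤ m := by exact_mod_cast hm
  have h1 : (0:ℝ) < (m:ℝ) + y := by have : (0:ℝ) ≤ y := Nat.cast_nonneg y; linarith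
  have h2 : (0:ℝ) < (m:ℝ) + y + 1 := by linarith
  rw [qm_eq', div_sub_div _ _ h1.ne' h2.ne']
  congr 1
  ring

lemma qm_nonneg (m y : ℕ) (hm : 1 ≤ m) : 0 ≤ qm m (y+1) := by
  have hm' : (1:ℝ) ≤ m := by exact_mod_cast hm
  have h1 : (0:ℝ) < (m:ℝ) + y := by have : (0:ℝ) ≤ y := Nat.cast_nonneg y; linarith
  have h2 : (0:ℝ) < (m:ℝ) + y + 1 := by linarith
  rw [qm_eq']
  positivity

lemma sum_q (m : ℕ) (hm : 1 ≤ m) (n : ℕ) :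
    ∑ y ∈ Finset.range n, qm m (y+1) = 1 - (m:ℝ)/((m:ℝ)+n) := by
  have := Finset.sum_range_sub' (f := fun y => (m:ℝ)/((m:ℝ)+y)) n
  push_cast at this
  simp only [← add_assoc] at this
  rw [Finset.sum_congr rfl (fun y _ => qm_eq m y hm), this]
  have hm' : (1:ℝ) ≤ m := by exact_mod_cast hm
  rw [show (m:ℝ) + 0 = m by ring, div_self (by linarith)]

lemma hasSum_q (m : ℕ) (hm : 1 ≤ m) : HasSum (fun y => qm m (y+1)) 1 := by
  rw [hasSum_iff_tendsto_nat_of_nonneg (fun y => qm_nonneg m y hm)]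
  simp only [sum_q m hm]
  have : Filter.Tendsto (fun n : ℕ => (m:ℝ)/((m:ℝ)+n)) Filter.atTop (nhds 0) := by
    apply Filter.Tendsto.div_atTop tendsto_const_nhds
    exact Filter.tendsto_atTop_add_const_left _ _ tendsto_natCast_atTop_atTop
  have := this.const_sub 1
  simpa using this

lemma inner_bound (A m : ℕ) (hA : 1 ≤ A) (hm : A ≤ m) :
    ∑' y : ℕ, qm m (y+1) * (1/Real.sqrt ((A:ℝ)+y+1))
      ≤ (1/2 + 1/(2*Real.sqrt 2)) / Real.sqrt A := by
  have hm1 : 1 ≤ m := le_trans hA hm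
  have hq : ∀ y, 0 ≤ qm m (y+1) := fun y => qm_nonneg m y hm1
  have hA' : (0:ℝ) < A := by exact_mod_cast hA
  have hsA : 0 < Real.sqrt A := Real.sqrt_pos.mpr hA'
  have hs2 : 0 < Real.sqrt 2 := Real.sqrt_pos.mpr (by norm_num)
  set g : ℕ → ℝ := fun y => qm m (y+1) * (if y < A then 1/Real.sqrt A else 1/(Real.sqrt 2 * Real.sqrt A)) with hg
  have hgnn : ∀ y, 0 ≤ g y := by
    intro y
    apply mul_nonneg (hq y)
    split <;> positivity
  have hfg : ∀ y, qm m (y+1) * (1/Real.sqrt ((A:ℝ)+y+1)) ≤ g y := by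
    intro y
    apply mul_le_mul_of_nonneg_left _ (hq y)
    by_cases h : y < A
    · rw [if_pos h]
      apply one_div_le_one_div_of_le hsA
      apply Real.sqrt_le_sqrt
      have : (0:ℝ) ≤ y := Nat.cast_nonneg y
      linarith
    · rw [if_neg h]
      rw [← Real.sqrt_mul (by norm_num)]
      apply one_div_le_one_div_of_le (by positivity)
      apply Real.sqrt_le_sqrt
      have : (A:ℝ) ≤ y := by exact_mod_cast Nat.le_of_not_lt h
      linarith
  have hqs : Summable (fun y => qm m (y+1)) := (hasSum_q m hm1).summable
  have hgs : Summable g := by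
    apply Summable.of_nonneg_of_le hgnn _ (hqs.mul_right (1/Real.sqrt A))
    intro y
    apply mul_le_mul_of_nonneg_left _ (hq y)
    split
    · exact le_refl _
    · rw [div_le_div_iff₀ (by positivity) hsA]
      nlinarith [Real.one_le_sqrt.mpr (by norm_num : (1:ℝ) ≤ 2)]
  have hfs : Summable (fun y => qm m (y+1) * (1/Real.sqrt ((A:ℝ)+y+1))) := by
    apply Summable.of_nonneg_of_le (fun y => mul_nonneg (hq y) (by positivity)) hfg hgs
  refine le_trans (Summable.tsum_le_tsum hfg hfs hgs) ?_
  -- compute tsum g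
  have htail : ∑' y : ℕ, qm m (y+A+1) = (m:ℝ)/((m:ℝ)+A) := by
    have h0 := ((Summable.sum_add_tsum_nat_add A hqs).symm)
    rw [(hasSum_q m hm1).tsum_eq, sum_q m hm1 A] at h0
    have : ∑' (i : ℕ), qm m (i + A + 1) = ∑' (i : ℕ), qm m (i + A + 1) := rfl
    linarith [h0]
  have hgeq : ∑' y, g y = (1 - (m:ℝ)/((m:ℝ)+A)) * (1/Real.sqrt A)
      + ((m:ℝ)/((m:ℝ)+A)) * (1/(Real.sqrt 2 * Real.sqrt A)) := by
    rw [← Summable.sum_add_tsum_nat_add A hgs]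
    congr 1
    · rw [show ∑ y ∈ Finset.range A, g y = (∑ y ∈ Finset.range A, qm m (y+1)) * (1/Real.sqrt A) by
        rw [Finset.sum_mul]
        exact Finset.sum_congr rfl (fun y hy => by
          rw [hg]; simp only [if_pos (Finset.mem_range.mp hy)])]
      rw [sum_q m hm1 A]
    · rw [show (fun y => g (y + A)) = fun y => qm m (y+A+1) * (1/(Real.sqrt 2 * Real.sqrt A)) by
        funext y
        rw [hg]; simp only [if_neg (by omega : ¬ (y + A < A))]]
      rw [tsum_mul_right, htail]
  rw [hgeq]
  -- final numeric bound
  have ht : (0:ℝ) < (m:ℝ) + A := by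
    have : (A:ℝ) ≤ m := by exact_mod_cast hm
    linarith
  set t : ℝ := (A:ℝ)/((m:ℝ)+A) with hts
  have ht2 : t ≤ 1/2 := by
    rw [hts, div_le_iff₀ ht]
    have : (A:ℝ) ≤ m := by exact_mod_cast hm
    linarith
  have ht0 : 0 ≤ t := by positivity
  have hmt : (m:ℝ)/((m:ℝ)+A) = 1 - t := by rw [hts]; field_simp; ring
  rw [hmt]
  have h1s : 1 ≤ Real.sqrt 2 := Real.one_le_sqrt.mpr (by norm_num)
  set u : ℝ := 1/Real.sqrt 2 with hu
  have hu1 : u ≤ 1 := by rw [hu, div_le_one hs2]; exact h1s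
  have hu0 : 0 ≤ u := by positivity
  have hkey : t + (1-t)*u ≤ 1/2 + 1/(2*Real.sqrt 2) := by
    have hprod : 0 ≤ (1/2 - t)*(1-u) := mul_nonneg (by linarith) (by linarith)
    have heq : 1/(2*Real.sqrt 2) = u/2 := by rw [hu]; ring
    rw [heq]
    nlinarith [hprod]
  calc (1 - (1-t)) * (1/Real.sqrt A) + (1-t) * (1/(Real.sqrt 2 * Real.sqrt A))
      = (t + (1-t)*u) * (1/Real.sqrt A) := by rw [hu]; field_simp; ring
    _ ≤ (1/2 + 1/(2*Real.sqrt 2)) * (1/Real.sqrt A) := by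
        exact mul_le_mul_of_nonneg_right hkey (by positivity)
    _ = (1/2 + 1/(2*Real.sqrt 2)) / Real.sqrt A := by ring


lemma K_real (N k : ℕ) (hk : k ≤ N) :
    ((N:ℝ) - k) * N.choose k = N * ((N-1).choose k) := by
  rw [← Nat.cast_sub hk]
  exact_mod_cast choose_ratio N k

lemma pascal_real (A n : ℕ) (hA : 1 ≤ A) :
    (((2*A).choose (n+1) : ℕ) : ℝ) = (2*A-1).choose n + (2*A-1).choose (n+1) := by
  have h : 2*A = (2*A-1)+1 := by omega
  rw [h, Nat.choose_succ_succ]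
  push_cast
  ring

lemma step_real (A n : ℕ) (hA : 1 ≤ A) (hn : n + 1 ≤ 2*A) :
    ((A:ℝ) - (n+1)) * (2*A).choose (n+1)
      = A * (((2*A-1).choose (n+1) : ℝ) - (2*A-1).choose n) := by
  have hK := K_real (2*A) (n+1) hn
  have hP := pascal_real A n hA
  push_cast at hK hP ⊢
  linear_combination hK - (A:ℝ)*hP

lemma I1 (A : ℕ) (hA : 1 ≤ A) : ∀ n, n ≤ 2*A →
    ∑ k ∈ Finset.range (n+1), 2*((A:ℝ)-k)^2 * (2*A).choose k
      = 2*A*( ((A:ℝ)-n) * ((2*A-1).choose n)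
          + ∑ k ∈ Finset.range n, (((2*A-1).choose k : ℕ) : ℝ) ) := by
  intro n
  induction n with
  | zero => intro _; simp; ring
  | succ n ih =>
    intro hn
    have hle : n ≤ 2*A := by omega
    have h1 := ih hle
    rw [Finset.sum_range_succ, h1, Finset.sum_range_succ]
    have h2 := step_real A n hA hn
    push_cast at h2 ⊢
    linear_combination 2*((A:ℝ)-(n+1))*h2

lemma cast_sub3 (A R : ℕ) (hRA : R < A) : ((A-R-1 : ℕ):ℝ) = (A:ℝ) - R - 1 := by
  have h : A-R-1 = A-(R+1) := by omega
  rw [h, Nat.cast_sub (by omega)]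
  push_cast
  ring

lemma I2 (A R : ℕ) (hR1 : 1 ≤ R) (hRA : R < A) :
    ((A:ℝ)+R+1) * ((2*A).choose (A-R-1))
      = 2*A*((2*A-1).choose (A-R-1)) := by
  have hk : A-R-1 ≤ 2*A := by omega
  have h := K_real (2*A) (A-R-1) hk
  rw [cast_sub3 A R hRA] at h
  push_cast at h ⊢
  linear_combination h


lemma outer_eq (A R : ℕ) (hR1 : 1 ≤ R) (hRA : R < A) :
    ∑ x ∈ Finset.Icc 1 (A-R), pRA A R x * ((R:ℝ)+x)
      = (R:ℝ) + 1 + (∑ k ∈ Finset.range (A-R-1), (((2*A-1).choose k : ℕ) : ℝ))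
          / (((2*A-1).choose (A-R-1) : ℕ) : ℝ) := by
  have hre : ∑ x ∈ Finset.Icc 1 (A-R), pRA A R x * ((R:ℝ)+x)
      = ∑ k ∈ Finset.range (A-R),
          (2*((A:ℝ)-k)^2 * (((2*A).choose k : ℕ) : ℝ))
            * (1/((((A:ℝ)+R+1)) * (((2*A).choose (A-R-1) : ℕ) : ℝ))) := by
    apply Finset.sum_nbij' (i := fun x => A-R-x) (j := fun k => A-R-k)
    · intro x hx
      simp only [Finset.mem_Icc, Finset.mem_range] at *
      omega
    · intro k hk
      simp only [Finset.mem_Icc, Finset.mem_range] at *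
      omega
    · intro x hx
      simp only [Finset.mem_Icc] at hx
      omega
    · intro k hk
      simp only [Finset.mem_range] at hk
      omega
    · intro x hx
      simp only [Finset.mem_Icc] at hx
      unfold pRA
      have h2 : ((A - R - x : ℕ) : ℝ) = (A:ℝ) - R - x := by
        have h : A - R - x = A - (R + x) := by omega
        rw [h, Nat.cast_sub (by omega)]
        push_cast; ring
      rw [h2]
      have hd1 : ((A:ℝ) + R + 1) ≠ 0 := by positivity
      have hd2 : (((2*A).choose (A-R-1) : ℕ) : ℝ) ≠ 0 := by
        have : 0 < (2*A).choose (A-R-1) := Nat.choose_pos (by omega)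
        exact_mod_cast this.ne'
      field_simp
      ring
  rw [hre, ← Finset.sum_mul]
  have hAR : A - R = (A - R - 1) + 1 := by omega
  set n := A - R - 1 with hn
  have hI1 := I1 A (by omega) n (by omega)
  rw [hAR, hI1]
  have hI2 := I2 A R hR1 hRA
  have hcast : ((A:ℝ) - n) = (R:ℝ) + 1 := by
    rw [hn, cast_sub3 A R hRA]; ring
  rw [hcast]
  have hBpos : (0:ℝ) < (((2*A-1).choose n : ℕ) : ℝ) := by
    exact_mod_cast Nat.choose_pos (by omega : n ≤ 2*A-1)
  have hApos : (0:ℝ) < (A:ℝ) := by exact_mod_cast (by omega : 0 < A)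
  have hdpos : (0:ℝ) < ((A:ℝ)+R+1) * (((2*A).choose n : ℕ) : ℝ) := by
    have : (0:ℝ) < (((2*A).choose n : ℕ) : ℝ) := by
      exact_mod_cast Nat.choose_pos (by omega : n ≤ 2*A)
    positivity
  rw [← hn] at hI2
  rw [show ((A:ℝ)+(R:ℝ)+1) * (((2*A).choose n : ℕ) : ℝ)
      = 2*(A:ℝ)*(((2*A-1).choose n : ℕ) : ℝ) from hI2]
  field_simp

section Tbound
variable (A R : ℕ)

set_option maxHeartbeats 1000000 in
lemma T_bound (hA : 100 ≤ A) (hR1 : 1 ≤ R) (hRA : R < A) :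
    (∑ k ∈ Finset.range (A-R-1), (((2*A-1).choose k : ℕ) : ℝ))
      / (((2*A-1).choose (A-R-1) : ℕ) : ℝ) ≤ 2 * Real.sqrt A := by
  set n := A - R - 1 with hn
  set M := 2*A - 1 with hM
  set B : ℕ → ℝ := fun k => ((M.choose k : ℕ) : ℝ) with hB
  set f : ℕ → ℝ := fun i => ((A:ℝ)-(i+1))/((A:ℝ)+(i+1)) with hf
  set P : ℕ → ℝ := fun j => ∏ i ∈ Finset.range j, f i with hP
  have hncast : ((n:ℕ):ℝ) = (A:ℝ) - R - 1 := by
    rw [hn, show A - R - 1 = A - (R+1) by omega, Nat.cast_sub (by omega)]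
    push_cast; ring
  have hnA : (n:ℝ) ≤ (A:ℝ) - 2 := by
    rw [hncast]
    have : (1:ℝ) ≤ R := by exact_mod_cast hR1
    linarith
  have hA0 : (0:ℝ) < A := by exact_mod_cast (by omega : 0 < A)
  -- basic facts about f
  have hf01 : ∀ i : ℕ, (i:ℝ)+1 ≤ (A:ℝ)-1 → 0 ≤ f i ∧ f i ≤ 1 := by
    intro i hi
    have hd : (0:ℝ) < (A:ℝ)+(i+1) := by positivity
    constructor
    · apply div_nonneg _ hd.le
      linarith
    · rw [div_le_one hd]
      have : (0:ℝ) ≤ i := Nat.cast_nonneg i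
      linarith
  have hBnn : ∀ k, 0 ≤ B k := fun k => Nat.cast_nonneg _
  have hPnn : ∀ j : ℕ, (j:ℝ) ≤ (A:ℝ)-1 → 0 ≤ P j := by
    intro j hj
    apply Finset.prod_nonneg
    intro i hi
    have hi' : i < j := Finset.mem_range.mp hi
    refine (hf01 i ?_).1
    have : (i:ℝ) + 1 ≤ (j:ℝ) := by exact_mod_cast hi'
    linarith
  -- the ratio bound
  have hrat : ∀ j, j ≤ n → B (n-j) ≤ B n * P j := by
    intro j
    induction j with
    | zero => intro _; simp [hP]
    | succ j ih =>
      intro hj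
      have hjn : j ≤ n := by omega
      have hIH := ih hjn
      have hjcast : (j:ℝ) + 1 ≤ (n:ℝ) := by exact_mod_cast hj
      -- the choose identity
      have hid : B (n-(j+1)) * ((A:ℝ)+R+j+1) = B (n-j) * ((A:ℝ)-R-1-j) := by
        have hnat : M.choose (n-j) * (n-j) = M.choose (n-(j+1)) * (M - (n-(j+1))) := by
          have h1 : n - j = (n-(j+1)) + 1 := by omega
          rw [h1, Nat.choose_succ_right_eq]
        have hM1 : M - (n-(j+1)) = A+R+j+1 := by omega
        have hnj : ((n-j : ℕ):ℝ) = (A:ℝ)-R-1-j := by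
          rw [show n - j = A - (R+1+j) by omega, Nat.cast_sub (by omega)]
          push_cast; ring
        rw [hM1] at hnat
        have := congrArg (fun t : ℕ => (t:ℝ)) hnat
        push_cast at this
        rw [hB]
        rw [hnj] at this
        linarith [this]
      have hq : ((A:ℝ)-R-1-j) * ((A:ℝ)+j+1) ≤ ((A:ℝ)-(j+1)) * ((A:ℝ)+R+j+1) := by
        nlinarith [mul_nonneg (Nat.cast_nonneg R : (0:ℝ) ≤ R) hA0.le]
      have hDpos : (0:ℝ) < (A:ℝ)+R+j+1 := by positivity
      have hEpos : (0:ℝ) < (A:ℝ)+j+1 := by positivity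
      have hAj : (0:ℝ) ≤ (A:ℝ)-(j+1) := by linarith
      have hPj : 0 ≤ P j := hPnn j (by linarith)
      have e4 : (B (n-(j+1)) * ((A:ℝ)+j+1)) * ((A:ℝ)+R+j+1)
          ≤ (B n * P j * ((A:ℝ)-(j+1))) * ((A:ℝ)+R+j+1) := by
        calc (B (n-(j+1)) * ((A:ℝ)+j+1)) * ((A:ℝ)+R+j+1)
            = (B (n-(j+1)) * ((A:ℝ)+R+j+1)) * ((A:ℝ)+j+1) := by ring
          _ = (B (n-j) * ((A:ℝ)-R-1-j)) * ((A:ℝ)+j+1) := by rw [hid]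
          _ = B (n-j) * (((A:ℝ)-R-1-j) * ((A:ℝ)+j+1)) := by ring
          _ ≤ B (n-j) * (((A:ℝ)-(j+1)) * ((A:ℝ)+R+j+1)) :=
              mul_le_mul_of_nonneg_left hq (hBnn _)
          _ ≤ (B n * P j) * (((A:ℝ)-(j+1)) * ((A:ℝ)+R+j+1)) :=
              mul_le_mul_of_nonneg_right hIH (mul_nonneg hAj hDpos.le)
          _ = (B n * P j * ((A:ℝ)-(j+1))) * ((A:ℝ)+R+j+1) := by ring
      have e5 := le_of_mul_le_mul_right e4 hDpos
      have hPsucc : P (j+1) = P j * (((A:ℝ)-((j:ℝ)+1))/((A:ℝ)+((j:ℝ)+1))) :=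
        Finset.prod_range_succ f j
      rw [hPsucc, show B n * (P j * (((A:ℝ)-((j:ℝ)+1))/((A:ℝ)+((j:ℝ)+1))))
          = (B n * P j * ((A:ℝ)-((j:ℝ)+1)))/((A:ℝ)+((j:ℝ)+1)) by ring,
        le_div_iff₀ (by positivity : (0:ℝ) < (A:ℝ)+((j:ℝ)+1))]
      nlinarith [e5]
  -- square root facts
  set mS := Nat.sqrt A with hmS
  set s := Real.sqrt A with hs
  have hs2 : s^2 = (A:ℝ) := Real.sq_sqrt hA0.le
  have hs0 : (0:ℝ) ≤ s := Real.sqrt_nonneg A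
  have hs10 : (10:ℝ) ≤ s := by
    rw [hs, show (10:ℝ) = Real.sqrt 100 by
      rw [show (100:ℝ) = 10^2 by norm_num, Real.sqrt_sq (by norm_num)]]
    exact Real.sqrt_le_sqrt (by exact_mod_cast hA)
  have hmS_le : (mS:ℝ) ≤ s := by
    have h1 : ((mS:ℝ))^2 ≤ (A:ℝ) := by exact_mod_cast Nat.sqrt_le' A
    nlinarith [(Nat.cast_nonneg mS : (0:ℝ) ≤ (mS:ℝ))]
  have hs_lt : s < (mS:ℝ)+1 := by
    have h1 : (A:ℝ) < ((mS:ℝ)+1)^2 := by exact_mod_cast Nat.lt_succ_sqrt' A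
    nlinarith [(Nat.cast_nonneg mS : (0:ℝ) ≤ (mS:ℝ))]
  set ρ : ℝ := ((A:ℝ)-((mS:ℝ)+1))/((A:ℝ)+((mS:ℝ)+1)) with hρ
  have hρnum : (0:ℝ) ≤ (A:ℝ) - ((mS:ℝ)+1) := by nlinarith
  have hρden : (0:ℝ) < (A:ℝ) + ((mS:ℝ)+1) := by positivity
  have hρ0 : 0 ≤ ρ := div_nonneg hρnum hρden.le
  have hρ1 : ρ < 1 := by
    rw [hρ, div_lt_one hρden]
    nlinarith [(Nat.cast_nonneg mS : (0:ℝ) ≤ (mS:ℝ))]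
  have hQ : ∀ j, j ≤ n → P j ≤ ρ^(j - mS) := by
    intro j
    induction j with
    | zero => intro _; rw [Nat.zero_sub, pow_zero]; simp [hP]
    | succ j ih =>
      intro hj
      have hjn : ((j:ℝ)+1) ≤ (n:ℝ) := by exact_mod_cast hj
      by_cases hcase : j+1 ≤ mS
      · rw [show (j+1) - mS = 0 by omega, pow_zero]
        rw [hP]
        apply Finset.prod_le_one
        · intro i hi
          refine (hf01 i ?_).1
          have : (i:ℝ)+1 ≤ (j:ℝ)+1 := by
            have := Finset.mem_range.mp hi; exact_mod_cast this
          linarith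
        · intro i hi
          refine (hf01 i ?_).2
          have : (i:ℝ)+1 ≤ (j:ℝ)+1 := by
            have := Finset.mem_range.mp hi; exact_mod_cast this
          linarith
      · have hIH := ih (by omega)
        have hmSj : (mS:ℝ) ≤ (j:ℝ) := by exact_mod_cast (by omega : mS ≤ j)
        have hstep : f j ≤ ρ := by
          rw [hf, hρ]
          apply div_le_div₀ hρnum (by linarith) hρden (by linarith)
        have hfj0 : 0 ≤ f j := (hf01 j (by linarith)).1
        calc P (j+1) = P j * f j := Finset.prod_range_succ f j
          _ ≤ ρ^(j-mS) * ρ :=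
              mul_le_mul hIH hstep hfj0 (pow_nonneg hρ0 _)
          _ = ρ^((j+1)-mS) := by
              rw [← pow_succ]
              congr 1
              omega
  -- the sum bound
  have hsum_le : (∑ k ∈ Finset.range n, B k)
      ≤ B n * ∑ j ∈ Finset.range n, ρ^((j+1) - mS) := by
    rw [← Finset.sum_range_reflect (fun k => B k) n, Finset.mul_sum]
    apply Finset.sum_le_sum
    intro j hj
    have hj' : j < n := Finset.mem_range.mp hj
    rw [show n - 1 - j = n - (j+1) by omega]
    calc B (n-(j+1)) ≤ B n * P (j+1) := hrat (j+1) (by omega)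
      _ ≤ B n * ρ^((j+1)-mS) :=
          mul_le_mul_of_nonneg_left (hQ (j+1) (by omega)) (hBnn n)
  have hgeo : ∑ j ∈ Finset.range n, ρ^((j+1) - mS) ≤ (mS:ℝ) + (1-ρ)⁻¹ := by
    have hinv0 : (0:ℝ) ≤ (1-ρ)⁻¹ := by
      apply inv_nonneg.mpr; linarith
    by_cases hcase : n ≤ mS
    · calc ∑ j ∈ Finset.range n, ρ^((j+1) - mS)
          ≤ ∑ _j ∈ Finset.range n, (1:ℝ) :=
            Finset.sum_le_sum (fun j _ => pow_le_one₀ hρ0 hρ1.le)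
        _ = n := by simp
        _ ≤ (mS:ℝ) := by exact_mod_cast hcase
        _ ≤ (mS:ℝ) + (1-ρ)⁻¹ := by linarith
    · have hmn : mS ≤ n := by omega
      rw [Finset.range_eq_Ico, ← Finset.sum_Ico_consecutive _ (Nat.zero_le mS) hmn]
      have h1 : ∑ j ∈ Finset.Ico 0 mS, ρ^((j+1)-mS) = (mS:ℝ) := by
        rw [Finset.sum_congr rfl (fun j hj => by
          rw [show (j+1) - mS = 0 by
            have := (Finset.mem_Ico.mp hj).2; omega, pow_zero])]
        simp
      have h2 : ∑ j ∈ Finset.Ico mS n, ρ^((j+1)-mS) ≤ (1-ρ)⁻¹ := by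
        rw [Finset.sum_Ico_eq_sum_range]
        have hterm : ∀ t ∈ Finset.range (n - mS), ρ^((mS+t+1)-mS) ≤ ρ^t := by
          intro t _
          rw [show (mS+t+1) - mS = t+1 by omega]
          calc ρ^(t+1) = ρ^t * ρ := pow_succ ρ t
            _ ≤ ρ^t * 1 := mul_le_mul_of_nonneg_left hρ1.le (pow_nonneg hρ0 t)
            _ = ρ^t := mul_one _
        calc ∑ t ∈ Finset.range (n-mS), ρ^((mS+t+1)-mS)
            ≤ ∑ t ∈ Finset.range (n-mS), ρ^t := Finset.sum_le_sum hterm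
          _ ≤ ∑' t : ℕ, ρ^t := Summable.sum_le_tsum _ (fun t _ => pow_nonneg hρ0 t)
              (summable_geometric_of_lt_one hρ0 hρ1)
          _ = (1-ρ)⁻¹ := tsum_geometric_of_lt_one hρ0 hρ1
      linarith
  -- final numeric bound
  have hnum : (mS:ℝ) + (1-ρ)⁻¹ ≤ 2*s := by
    have h1ρ : 1 - ρ = (2*((mS:ℝ)+1))/((A:ℝ)+((mS:ℝ)+1)) := by
      rw [hρ]; field_simp; ring
    have h2 : (1-ρ)⁻¹ = ((A:ℝ)+((mS:ℝ)+1))/(2*((mS:ℝ)+1)) := by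
      rw [h1ρ]
      rw [inv_div]
    rw [h2]
    have h3 : ((A:ℝ)+((mS:ℝ)+1))/(2*((mS:ℝ)+1)) ≤ (s^2+s+1)/(2*s) := by
      apply div_le_div₀ (by nlinarith [hs10, hs0]) (by linarith [hs2, hmS_le])
        (by linarith [hs10]) (by linarith [hs_lt])
    have h4 : (s^2+s+1)/(2*s) ≤ s := by
      rw [div_le_iff₀ (by linarith [hs10])]
      nlinarith [mul_self_nonneg (s-10), hs10]
    linarith
  have hBn_pos : (0:ℝ) < B n := by
    have h : 0 < M.choose n := Nat.choose_pos (by omega)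
    show (0:ℝ) < ((M.choose n : ℕ):ℝ)
    exact_mod_cast h
  rw [div_le_iff₀ hBn_pos]
  calc ∑ k ∈ Finset.range n, B k
      ≤ B n * ∑ j ∈ Finset.range n, ρ^((j+1) - mS) := hsum_le
    _ ≤ B n * ((mS:ℝ) + (1-ρ)⁻¹) := mul_le_mul_of_nonneg_left hgeo (hBnn n)
    _ ≤ B n * (2*s) := mul_le_mul_of_nonneg_left hnum (hBnn n)
    _ = 2 * s * B n := by ring

end Tbound

lemma pRA_nonneg (A R x : ℕ) : 0 ≤ pRA A R x := by
  unfold pRA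
  positivity

/-- The one-step drift inequality (eqn:tightness) of Lemma 4.2: there are
`c₁ ∈ (0,1)`, `c₂ > 0` and `N` such that for all `A ≥ N` and `1 ≤ R < A`,
`∑_{x=1}^{A-R} ∑_{y=1}^∞ p_{R,A}(x)·q_{A+R+x}(y)·(R+x)/√(A+y) ≤ c₁·R/√A + c₂`
(below the inner summation index `y : ℕ` corresponds to the value `y + 1 ≥ 1`). -/
theorem stmt_17 :
    ∃ c₁ ∈ Set.Ioo (0 : ℝ) 1, ∃ c₂ : ℝ, 0 < c₂ ∧ ∃ N : ℕ,
      ∀ A : ℕ, N ≤ A → ∀ R : ℕ, 1 ≤ R → R < A →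
        (∑ x ∈ Finset.Icc 1 (A - R), ∑' y : ℕ,
          pRA A R x * qm (A + R + x) (y + 1) *
            (((R : ℝ) + x) / Real.sqrt ((A : ℝ) + y + 1)))
          ≤ c₁ * (R : ℝ) / Real.sqrt A + c₂ := by
  have h2 : Real.sqrt 2 * Real.sqrt 2 = 2 := Real.mul_self_sqrt (by norm_num)
  have hs2p : 0 < Real.sqrt 2 := Real.sqrt_pos.mpr (by norm_num)
  have h14 : (7/5:ℝ) ≤ Real.sqrt 2 := by nlinarith
  set c : ℝ := 1/2 + 1/(2*Real.sqrt 2) with hc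
  have hc0 : 0 < c := by positivity
  have hc86 : c ≤ (43/50:ℝ) := by
    rw [hc]
    have : 1/(2*Real.sqrt 2) ≤ (9/25:ℝ) := by
      rw [div_le_iff₀ (by positivity)]
      nlinarith
    linarith
  have hc1 : c < 1 := lt_of_le_of_lt hc86 (by norm_num)
  refine ⟨c, ⟨hc0, hc1⟩, 2, by norm_num, 100, ?_⟩
  intro A hA R hR1 hRA
  have hA1 : 1 ≤ A := by omega
  have hA0 : (0:ℝ) < A := by exact_mod_cast hA1
  set s : ℝ := Real.sqrt A with hs
  have hs0 : 0 < s := Real.sqrt_pos.mpr hA0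
  have hs10 : (10:ℝ) ≤ s := by
    rw [hs, show (10:ℝ) = Real.sqrt 100 by
      rw [show (100:ℝ) = 10^2 by norm_num, Real.sqrt_sq (by norm_num)]]
    exact Real.sqrt_le_sqrt (by exact_mod_cast hA)
  have hterm : ∀ x ∈ Finset.Icc 1 (A-R),
      (∑' y : ℕ, pRA A R x * qm (A + R + x) (y + 1) *
          (((R : ℝ) + x) / Real.sqrt ((A : ℝ) + y + 1)))
        = (pRA A R x * ((R:ℝ)+x)) *
            ∑' y : ℕ, qm (A+R+x) (y+1) * (1/Real.sqrt ((A:ℝ)+y+1)) := by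
    intro x _
    rw [← tsum_mul_left]
    apply tsum_congr
    intro y
    ring
  have houter : ∑ x ∈ Finset.Icc 1 (A-R), pRA A R x * ((R:ℝ)+x) ≤ (R:ℝ) + 1 + 2*s := by
    rw [outer_eq A R hR1 hRA]
    have := T_bound A R hA hR1 hRA
    linarith
  have hpnn : ∀ x, 0 ≤ pRA A R x * ((R:ℝ)+x) := by
    intro x
    apply mul_nonneg (pRA_nonneg A R x)
    positivity
  calc ∑ x ∈ Finset.Icc 1 (A - R), ∑' y : ℕ,
          pRA A R x * qm (A + R + x) (y + 1) *
            (((R : ℝ) + x) / Real.sqrt ((A : ℝ) + y + 1))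
      = ∑ x ∈ Finset.Icc 1 (A-R), (pRA A R x * ((R:ℝ)+x)) *
            ∑' y : ℕ, qm (A+R+x) (y+1) * (1/Real.sqrt ((A:ℝ)+y+1)) :=
        Finset.sum_congr rfl hterm
    _ ≤ ∑ x ∈ Finset.Icc 1 (A-R), (pRA A R x * ((R:ℝ)+x)) * (c/s) := by
        apply Finset.sum_le_sum
        intro x _
        exact mul_le_mul_of_nonneg_left
          (inner_bound A (A+R+x) hA1 (by omega)) (hpnn x)
    _ = (∑ x ∈ Finset.Icc 1 (A-R), pRA A R x * ((R:ℝ)+x)) * (c/s) := by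
        rw [Finset.sum_mul]
    _ ≤ ((R:ℝ) + 1 + 2*s) * (c/s) :=
        mul_le_mul_of_nonneg_right houter (by positivity)
    _ = c * (R:ℝ)/s + (c/s + 2*c) := by
        field_simp
        ring
    _ ≤ c * (R:ℝ)/s + 2 := by
        have hcs : c/s ≤ c/10 := by
          rw [div_le_div_iff₀ hs0 (by norm_num)]
          nlinarith
        linarith
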